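/- Let I be a good ideal in K[x_1,…,x_n], let k_1,…,k_n be nonnegative integers with l := k_1+⋯+k_n ≥ 1, and let m = μ_1^{k_1}⋯μ_n^{k_n}. Then m is a minimal generator of I^l, i.e. m ∈ G(I^l). -/

import Mathlib

open MvPolynomial

namespace GasanovaRR

/-- The monomial `x^α` in `K[x_1,…,x_n]`. -/
noncomputable def mono (K : Type*) [Field K] {n : ℕ} (α : Fin n → ℕ) :
    MvPolynomial (Fin n) K :=
  MvPolynomial.monomial (Finsupp.equivFunOnFinite.symm α) 1

/-- `I` is a monomial ideal: it is generated by a set of monomials. -/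
def IsMonomialIdeal {K : Type*} [Field K] {n : ℕ}
    (I : Ideal (MvPolynomial (Fin n) K)) : Prop :=
  ∃ A : Set (Fin n → ℕ), I = Ideal.span (mono K '' A)

/-- `x^α` is a minimal monomial generator of `I`, i.e. `x^α ∈ G(I)`:
`x^α ∈ I` and no monomial in `I` strictly divides it. -/
def IsMinGen {K : Type*} [Field K] {n : ℕ}
    (I : Ideal (MvPolynomial (Fin n) K)) (α : Fin n → ℕ) : Prop :=
  mono K α ∈ I ∧ ∀ β : Fin n → ℕ, mono K β ∈ I → β ≤ α → β = α

/-- The point `α` lies in the box `B_{a_1,…,a_n}` (for box sizes `d_1,…,d_n`). -/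
def InBox {n : ℕ} (d a α : Fin n → ℕ) : Prop :=
  ∀ i, a i * d i ≤ α i ∧ α i ≤ (a i + 1) * d i

/-- `I` is a good ideal (w.r.t. box sizes `d`): for every `l ≥ 1`, every minimal
generator of `I^l` lies in a box whose coordinate sum is `l - 1`. -/
def IsGood {K : Type*} [Field K] {n : ℕ}
    (I : Ideal (MvPolynomial (Fin n) K)) (d : Fin n → ℕ) : Prop :=
  ∀ l : ℕ, 1 ≤ l → ∀ α : Fin n → ℕ, IsMinGen (I ^ l) α →
    ∃ a : Fin n → ℕ, InBox d a α ∧ ∑ i, a i = l - 1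

/-- `I` is an `𝔪`-primary monomial ideal whose minimal generating set contains
`μ_i = x_i^{d_i}` with `d_i > 0` for each `i`. -/
def MPrimaryWithCorners {K : Type*} [Field K] {n : ℕ}
    (I : Ideal (MvPolynomial (Fin n) K)) (d : Fin n → ℕ) : Prop :=
  IsMonomialIdeal I ∧ I ≠ ⊤ ∧ (∀ i, 0 < d i) ∧ ∀ i, IsMinGen I (Pi.single i (d i))

/-- The ideal `I_{a_1,…,a_n}` associated to the box `B_{a_1,…,a_n}`, generated by
`m / (μ_1^{a_1}⋯μ_n^{a_n})` for `m ∈ B_{a_1,…,a_n} ∩ G(I^l)`, `l = a_1+⋯+a_n+1`. -/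
noncomputable def boxIdeal {K : Type*} [Field K] {n : ℕ}
    (I : Ideal (MvPolynomial (Fin n) K)) (d a : Fin n → ℕ) :
    Ideal (MvPolynomial (Fin n) K) :=
  Ideal.span ((fun α => mono K (α - fun i => a i * d i)) ''
    {α | InBox d a α ∧ IsMinGen (I ^ (∑ i, a i + 1)) α})

/-- The Ratliff–Rush closure `Ĩ = ⋃_{k ≥ 0} (I^{k+1} : I^k)`. -/
noncomputable def ratliffRush {K : Type*} [Field K] {n : ℕ}
    (I : Ideal (MvPolynomial (Fin n) K)) : Ideal (MvPolynomial (Fin n) K) :=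
  ⨆ k : ℕ, (I ^ (k + 1)).colon ((I ^ k : Ideal (MvPolynomial (Fin n) K)) : Set (MvPolynomial (Fin n) K))

/-- The cone in `ℕ^n` with set `S` of fixed coordinates and vertex `v`. -/
def Cone {n : ℕ} (S : Set (Fin n)) (v : Fin n → ℕ) : Set (Fin n → ℕ) :=
  {b | (∀ i ∈ S, b i = v i) ∧ ∀ i ∉ S, v i ≤ b i}

/-- `I` is a very good ideal: it is good and `I_{a_1,…,a_n} = I` for all boxes. -/
def IsVeryGood {K : Type*} [Field K] {n : ℕ}
    (I : Ideal (MvPolynomial (Fin n) K)) (d : Fin n → ℕ) : Prop :=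
  IsGood I d ∧ ∀ a : Fin n → ℕ, boxIdeal I d a = I

/-! ### Auxiliary lemmas for Remark 4.3 -/

section Aux

variable (K : Type*) [Field K] {n : ℕ}

lemma mono_mul (a b : Fin n → ℕ) : mono K a * mono K b = mono K (a + b) := by
  have h : Finsupp.equivFunOnFinite.symm (a + b)
      = Finsupp.equivFunOnFinite.symm a + Finsupp.equivFunOnFinite.symm b := by
    ext i; simp
  simp [mono, monomial_mul, h]

lemma mono_zero : mono K (0 : Fin n → ℕ) = 1 := by
  have h : Finsupp.equivFunOnFinite.symm (0 : Fin n → ℕ) = 0 := by ext i; simp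
  simp [mono, h, monomial_zero']

lemma mono_pow (a : Fin n → ℕ) (N : ℕ) :
    mono K a ^ N = mono K (fun i => N * a i) := by
  induction N with
  | zero =>
    have h0 : (fun i => 0 * a i) = (0 : Fin n → ℕ) := by funext i; simp
    rw [pow_zero, h0, mono_zero]
  | succ N ih =>
    rw [pow_succ, ih, mono_mul]
    congr 1
    funext i
    simp [Nat.succ_mul]

open Pointwise in
/-- The `l`-fold sumset of `A`. -/
def sumSet (A : Set (Fin n → ℕ)) : ℕ → Set (Fin n → ℕ)
  | 0 => {0}
  | l + 1 => Set.image2 (· + ·) (sumSet A l) A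

open Pointwise in
lemma span_mono_pow (A : Set (Fin n → ℕ)) (l : ℕ) :
    (Ideal.span (mono K '' A)) ^ l = Ideal.span (mono K '' sumSet A l) := by
  have himg : ∀ (X Y : Set (Fin n → ℕ)),
      (mono K '' X) * (mono K '' Y) = mono K '' (Set.image2 (· + ·) X Y) := by
    intro X Y
    ext z
    simp only [Set.mem_mul, Set.mem_image, Set.mem_image2]
    constructor
    · rintro ⟨_, ⟨x, hx, rfl⟩, _, ⟨y, hy, rfl⟩, rfl⟩
      exact ⟨x + y, ⟨x, hx, y, hy, rfl⟩, (mono_mul K x y).symm⟩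
    · rintro ⟨_, ⟨x, hx, y, hy, rfl⟩, rfl⟩
      exact ⟨mono K x, ⟨x, hx, rfl⟩, mono K y, ⟨y, hy, rfl⟩, mono_mul K x y⟩
  induction l with
  | zero =>
    simp only [pow_zero, sumSet]
    rw [Set.image_singleton, mono_zero, Ideal.span_singleton_one, Ideal.one_eq_top]
  | succ l ih =>
    rw [pow_succ, ih, Ideal.span_mul_span', himg]
    rfl

lemma mono_mem_span (A : Set (Fin n → ℕ)) (β : Fin n → ℕ)
    (h : mono K β ∈ Ideal.span (mono K '' A)) : ∃ s ∈ A, ∀ i, s i ≤ β i := by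
  classical
  have himg : mono K '' A
      = (fun s => monomial s (1 : K)) '' (Finsupp.equivFunOnFinite.symm '' A) := by
    rw [Set.image_image]; rfl
  rw [himg, mem_ideal_span_monomial_image] at h
  have hsupp : Finsupp.equivFunOnFinite.symm β ∈ (mono K β).support := by
    rw [mono, support_monomial, if_neg (one_ne_zero)]
    exact Finset.mem_singleton_self _
  obtain ⟨si, hsi, hle⟩ := h _ hsupp
  obtain ⟨s, hs, rfl⟩ := hsi
  refine ⟨s, hs, fun i => ?_⟩
  have := hle i
  simpa using this

lemma sumSet_weight {A : Set (Fin n → ℕ)} (f : (Fin n → ℕ) → ℕ)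
    (hfadd : ∀ a b, f (a + b) = f a + f b) (c : ℕ) (hA : ∀ a ∈ A, c ≤ f a) :
    ∀ l, ∀ s ∈ sumSet A l, l * c ≤ f s := by
  intro l
  induction l with
  | zero =>
    intro s hs
    simp [sumSet] at hs
    simp [hs]
  | succ l ih =>
    rintro s ⟨x, hx, y, hy, rfl⟩
    have h1 := ih x hx
    have h2 := hA y hy
    rw [hfadd]
    calc (l + 1) * c = l * c + c := by ring
    _ ≤ f x + f y := Nat.add_le_add h1 h2

/-- Key weight lemma: every monomial in a good ideal has weighted degree at least `1`,
i.e. `∑ gᵢ·(D/dᵢ) ≥ D` where `D = ∏ dᵢ`. -/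
lemma weight_ge {I : Ideal (MvPolynomial (Fin n) K)} {d : Fin n → ℕ}
    (hd : ∀ i, 0 < d i) (hgood : IsGood I d) {g : Fin n → ℕ}
    (hg : mono K g ∈ I) :
    ∏ i, d i ≤ ∑ i, g i * ((∏ j, d j) / d i) := by
  set D := ∏ i, d i with hDdef
  have hDpos : 0 < D := Finset.prod_pos (fun i _ => hd i)
  have hdvd : ∀ i : Fin n, d i ∣ D := fun i => Finset.dvd_prod_of_mem d (Finset.mem_univ i)
  have hcancel : ∀ i : Fin n, d i * (D / d i) = D := fun i => Nat.mul_div_cancel' (hdvd i)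
  set Ng : Fin n → ℕ := fun i => (D + 1) * g i with hNgdef
  have hNg : mono K Ng ∈ I ^ (D + 1) := by
    rw [hNgdef, ← mono_pow]
    exact Ideal.pow_mem_pow hg _
  set S : Set (Fin n → ℕ) := {β | mono K β ∈ I ^ (D + 1) ∧ ∀ i, β i ≤ Ng i} with hSdef
  set T : Set ℕ := (fun β => ∑ i, β i) '' S with hTdef
  have hTne : T.Nonempty := ⟨∑ i, Ng i, ⟨Ng, ⟨hNg, fun i => le_rfl⟩, rfl⟩⟩
  obtain ⟨c, hcS, hcsum⟩ := Nat.sInf_mem hTne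
  have hmin : IsMinGen (I ^ (D + 1)) c := by
    refine ⟨hcS.1, fun β hβ hle => ?_⟩
    have hβS : β ∈ S := ⟨hβ, fun i => le_trans (hle i) (hcS.2 i)⟩
    have h1 : sInf T ≤ ∑ i, β i := Nat.sInf_le ⟨β, hβS, rfl⟩
    have h2 : ∑ i, β i ≤ ∑ i, c i := Finset.sum_le_sum (fun i _ => hle i)
    have hcsum' : ∑ i, c i = sInf T := hcsum
    have h3 : ∑ i, β i = ∑ i, c i := le_antisymm h2 (hcsum' ▸ h1)
    have h4 := (Finset.sum_eq_sum_iff_of_le (s := Finset.univ) (f := β) (g := c)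
      (fun j _ => hle j)).1 h3
    funext i
    exact h4 i (Finset.mem_univ i)
  have hone : 1 ≤ D + 1 := Nat.le_add_left 1 D
  have hgc := hgood (D + 1) hone c hmin
  obtain ⟨a, hbox, hasum⟩ := hgc
  have hasum' : ∑ i, a i = D := by simpa using hasum
  have key : D * D ≤ (D + 1) * ∑ i, g i * (D / d i) := by
    calc D * D = (∑ i, a i) * D := by rw [hasum']
    _ = ∑ i, a i * D := Finset.sum_mul _ _ _
    _ ≤ ∑ i, c i * (D / d i) := by
        refine Finset.sum_le_sum (fun i _ => ?_)
        calc a i * D = (a i * d i) * (D / d i) := by rw [mul_assoc, hcancel i]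
        _ ≤ c i * (D / d i) := Nat.mul_le_mul_right _ (hbox i).1
    _ ≤ ∑ i, Ng i * (D / d i) := Finset.sum_le_sum (fun i _ => Nat.mul_le_mul_right _ (hcS.2 i))
    _ = (D + 1) * ∑ i, g i * (D / d i) := by
        rw [Finset.mul_sum]
        exact Finset.sum_congr rfl (fun i _ => by rw [hNgdef, mul_assoc])
  by_contra hcon
  push_neg at hcon
  set w := ∑ i, g i * (D / d i) with hwdef
  have hw1 : w + 1 ≤ D := hcon
  have := Nat.mul_le_mul_left (D + 1) hw1
  nlinarith [key, this]

lemma mono_sum_single (v : Fin n → ℕ) :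
    mono K v = ∏ i, mono K (Pi.single i (v i)) := by
  have hsum : ∀ (s : Finset (Fin n)) (f : Fin n → (Fin n → ℕ)),
      mono K (∑ i ∈ s, f i) = ∏ i ∈ s, mono K (f i) := by
    intro s f
    induction s using Finset.cons_induction with
    | empty => simp [mono_zero]
    | cons i s his ih =>
      rw [Finset.sum_cons, Finset.prod_cons, ← mono_mul, ih]
  have hv : v = ∑ i, Pi.single i (v i) := by
    rw [Finset.univ_sum_single]
  conv_lhs => rw [hv]
  exact hsum _ _

end Aux

/-- Remark 4.3 (corners are needed): if `I` is good and `k_1 + ⋯ + k_n = l ≥ 1`,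
then the corner `μ_1^{k_1}⋯μ_n^{k_n}` is a minimal generator of `I^l`. -/
theorem corner_isMinGen {K : Type*} [Field K] {n : ℕ}
    (I : Ideal (MvPolynomial (Fin n) K)) (d : Fin n → ℕ)
    (hI : MPrimaryWithCorners I d) (hgood : IsGood I d)
    (k : Fin n → ℕ) (hk : 1 ≤ ∑ i, k i) :
    IsMinGen (I ^ (∑ i, k i)) (fun i => k i * d i) := by
  obtain ⟨hmon, -, hd, hμ⟩ := hI
  set l := ∑ i, k i with hldef
  set α : Fin n → ℕ := fun i => k i * d i with hαdef
  set D := ∏ i, d i with hDdef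
  have hDpos : 0 < D := Finset.prod_pos (fun i _ => hd i)
  have hdvd : ∀ i : Fin n, d i ∣ D := fun i => Finset.dvd_prod_of_mem d (Finset.mem_univ i)
  have hcancel : ∀ i : Fin n, d i * (D / d i) = D := fun i => Nat.mul_div_cancel' (hdvd i)
  have hqpos : ∀ i : Fin n, 0 < D / d i :=
    fun i => Nat.div_pos (Nat.le_of_dvd hDpos (hdvd i)) (hd i)
  constructor
  · -- membership : mono α ∈ I ^ l
    have h1 : mono K α = ∏ i, (mono K (Pi.single i (d i))) ^ (k i) := by
      rw [mono_sum_single]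
      refine Finset.prod_congr rfl (fun i _ => ?_)
      rw [mono_pow]
      congr 1
      funext j
      simp [hαdef, Pi.single_apply, mul_ite]
    rw [h1, hldef, ← Finset.prod_pow_eq_pow_sum]
    exact Ideal.prod_mem_prod (fun i _ => Ideal.pow_mem_pow (hμ i).1 _)
  · -- minimality
    intro β hβ hβle
    obtain ⟨A, hA⟩ := hmon
    rw [hA, span_mono_pow] at hβ
    obtain ⟨s, hsmem, hsle⟩ := mono_mem_span K _ _ hβ
    have hAw : ∀ a ∈ A, D ≤ ∑ i, a i * (D / d i) := by
      intro a ha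
      refine weight_ge K hd hgood ?_
      rw [hA]
      exact Ideal.subset_span ⟨a, ha, rfl⟩
    have hWs : l * D ≤ ∑ i, s i * (D / d i) := by
      refine sumSet_weight (fun γ => ∑ i, γ i * (D / d i)) ?_ D hAw l s hsmem
      intro a b
      rw [← Finset.sum_add_distrib]
      exact Finset.sum_congr rfl (fun i _ => by simp [add_mul])
    have hWβ : ∑ i, s i * (D / d i) ≤ ∑ i, β i * (D / d i) :=
      Finset.sum_le_sum (fun i _ => Nat.mul_le_mul_right _ (hsle i))
    have hWα : ∑ i, α i * (D / d i) = l * D := by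
      rw [hldef, Finset.sum_mul]
      refine Finset.sum_congr rfl (fun i _ => ?_)
      rw [hαdef]
      calc k i * d i * (D / d i) = k i * (d i * (D / d i)) := by rw [mul_assoc]
      _ = k i * D := by rw [hcancel i]
    have hle2 : ∑ i, β i * (D / d i) ≤ ∑ i, α i * (D / d i) :=
      Finset.sum_le_sum (fun i _ => Nat.mul_le_mul_right _ (hβle i))
    have heq : ∑ i, β i * (D / d i) = ∑ i, α i * (D / d i) := by omega
    funext i
    have := (Finset.sum_eq_sum_iff_of_le
      (fun i _ => Nat.mul_le_mul_right (D / d i) (hβle i))).1 heq i (Finset.mem_univ i)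
    exact Nat.eq_of_mul_eq_mul_right (hqpos i) this
end GasanovaRR
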